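/- Define group elements w_n of G(1,2) recursively by w_0 = t and w_{n+1} = b·w_n·a·w_n⁻¹·b⁻¹, and define their lengths as words by ℓ(0) = 1 and ℓ(n+1) = 2·ℓ(n) + 3. Then for all n: ℓ(n) = 2^{n+2} − 3, and w_n = t^{tow(n+1)} in G(1,2), where tow is the tower function defined by tow(0) = 0 and tow(i+1) = 2^{tow(i)}. -/

import Mathlib

/-- The ring of dyadic rationals `ℤ[1/2]`, as a subring of `ℚ`. -/
def DyadicQ : Subring ℚ := Subring.closure {(2:ℚ)⁻¹}

lemma DyadicQ.two_mem : (2:ℚ) ∈ DyadicQ := by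
  have := add_mem (Subring.one_mem DyadicQ) (Subring.one_mem DyadicQ)
  rwa [one_add_one_eq_two] at this

lemma DyadicQ.half_mem : (2:ℚ)⁻¹ ∈ DyadicQ := Subring.subset_closure rfl

/-- `2` as a unit of `ℤ[1/2]`. -/
def DyadicQ.two : DyadicQˣ where
  val := ⟨2, DyadicQ.two_mem⟩
  inv := ⟨(2:ℚ)⁻¹, DyadicQ.half_mem⟩
  val_inv := by ext; norm_num
  inv_val := by ext; norm_num

/-- The powers `2^m` for `m : ℤ`, as elements of `ℤ[1/2]`. -/
def pow2 (m : ℤ) : DyadicQ := ((DyadicQ.two ^ m : DyadicQˣ) : DyadicQ)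

lemma pow2_add (m q : ℤ) : pow2 (m + q) = pow2 m * pow2 q := by
  simp [pow2, zpow_add]

lemma pow2_zero : pow2 0 = 1 := by simp [pow2]

/-- The group `H = ℤ[1/2] ⋊ ℤ`, where `ℤ` acts by powers of `2`;
multiplication is `(r,m)·(s,q) = (r + 2^m·s, m+q)`. -/
@[ext] structure Hgrp where
  r : DyadicQ
  m : ℤ

instance : Mul Hgrp := ⟨fun x y => ⟨x.r + pow2 x.m * y.r, x.m + y.m⟩⟩
instance : One Hgrp := ⟨⟨0, 0⟩⟩
instance : Inv Hgrp := ⟨fun x => ⟨-(pow2 (-x.m) * x.r), -x.m⟩⟩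

lemma Hgrp.mul_def (x y : Hgrp) : x * y = ⟨x.r + pow2 x.m * y.r, x.m + y.m⟩ := rfl
lemma Hgrp.one_def : (1 : Hgrp) = ⟨0, 0⟩ := rfl
lemma Hgrp.inv_def (x : Hgrp) : x⁻¹ = ⟨-(pow2 (-x.m) * x.r), -x.m⟩ := rfl

instance : Group Hgrp where
  mul_assoc a b c := by
    simp only [Hgrp.mul_def, Hgrp.mk.injEq, pow2_add]
    constructor <;> ring
  one_mul a := by
    obtain ⟨r, m⟩ := a
    simp only [Hgrp.one_def, Hgrp.mul_def, Hgrp.mk.injEq, pow2_zero]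
    constructor <;> ring
  mul_one a := by
    obtain ⟨r, m⟩ := a
    simp only [Hgrp.one_def, Hgrp.mul_def, Hgrp.mk.injEq, pow2_zero]
    constructor <;> ring
  inv_mul_cancel a := by
    simp only [Hgrp.inv_def, Hgrp.mul_def, Hgrp.one_def, Hgrp.mk.injEq]
    constructor <;> ring

/-- Conjugacy in `H`. -/
def conjH (x y : Hgrp) : Prop := ∃ z : Hgrp, z * x * z⁻¹ = y

/-- The element `a = (1,0)` of `H`. -/
def aH : Hgrp := ⟨1, 0⟩
/-- The element `t = (0,1)` of `H`. -/
def tH : Hgrp := ⟨0, 1⟩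
lemma aH_zpow (n : ℤ) : aH ^ n = Hgrp.mk (n : DyadicQ) 0 := by
  induction n using Int.induction_on with
  | zero => simp [Hgrp.one_def]
  | succ k ih =>
      rw [zpow_add_one, ih]
      simp only [aH, Hgrp.mul_def, Hgrp.mk.injEq, pow2_zero]
      push_cast
      constructor <;> first | ring | (apply Subtype.ext; push_cast; ring) | simp | (apply Subtype.ext; simp; ring)
  | pred k ih =>
      rw [zpow_sub_one, ih]
      simp only [aH, Hgrp.inv_def, Hgrp.mul_def, Hgrp.mk.injEq, pow2_zero, neg_zero]
      push_cast
      constructor <;> first | ring | (apply Subtype.ext; push_cast; ring) | simp | (apply Subtype.ext; simp; ring)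

lemma tH_zpow (n : ℤ) : tH ^ n = Hgrp.mk 0 n := by
  induction n using Int.induction_on with
  | zero => simp [Hgrp.one_def]
  | succ k ih =>
      rw [zpow_add_one, ih]
      simp [tH, Hgrp.mul_def]
  | pred k ih =>
      rw [zpow_sub_one, ih]
      simp only [tH, Hgrp.inv_def, Hgrp.mul_def, Hgrp.mk.injEq]
      constructor <;> ring

lemma aH_zpow_injective : Function.Injective fun n : ℤ => aH ^ n := by
  intro x y h
  simp only [aH_zpow, Hgrp.mk.injEq] at h
  have : ((x : DyadicQ) : ℚ) = ((y : DyadicQ) : ℚ) := by rw [h.1]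
  simpa using this

lemma tH_zpow_injective : Function.Injective fun n : ℤ => tH ^ n := by
  intro x y h
  simp only [tH_zpow, Hgrp.mk.injEq] at h
  exact h.2

/-- The homomorphism `ℤ →* G` given by powers of `g`. -/
def zintHom {G : Type*} [Group G] (g : G) : Multiplicative ℤ →* G where
  toFun n := g ^ (Multiplicative.toAdd n)
  map_one' := by simp
  map_mul' x y := by simp [zpow_add]

/-- For `g` with `n ↦ g ^ n` injective, `⟨g⟩ ≅ ℤ`. -/
noncomputable def zpowMulEquiv {G : Type*} [Group G] (g : G)
    (hg : Function.Injective fun n : ℤ => g ^ n) :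
    Multiplicative ℤ ≃* Subgroup.zpowers g := by
  refine MulEquiv.ofBijective
    ((zintHom g).codRestrict (Subgroup.zpowers g).toSubmonoid
      (fun n => Subgroup.mem_zpowers_iff.mpr ⟨Multiplicative.toAdd n, rfl⟩)) ⟨?_, ?_⟩
  · intro x y h
    have : g ^ (Multiplicative.toAdd x) = g ^ (Multiplicative.toAdd y) :=
      congrArg Subtype.val h
    exact hg this
  · rintro ⟨x, hx⟩
    obtain ⟨n, hn⟩ := Subgroup.mem_zpowers_iff.mp hx
    exact ⟨Multiplicative.ofAdd n, Subtype.ext hn⟩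

/-- The associated isomorphism `⟨a⟩ ≅ ⟨t⟩`, `a ↦ t`, of the HNN extension defining
the Baumslag group. -/
noncomputable def φBS : Subgroup.zpowers aH ≃* Subgroup.zpowers tH :=
  (zpowMulEquiv aH aH_zpow_injective).symm.trans (zpowMulEquiv tH tH_zpow_injective)

/-- The Baumslag group `G(1,2)`, as HNN extension of `H = BS(1,2)` with stable letter `b`,
associated subgroups `⟨a⟩` and `⟨t⟩`, and associated isomorphism `a ↦ t`. -/
noncomputable abbrev BG := HNNExtension Hgrp (Subgroup.zpowers aH) (Subgroup.zpowers tH) φBS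

/-- The embedding of `H` into the Baumslag group. -/
noncomputable def ι : Hgrp →* BG := HNNExtension.of

/-- The stable letter `b` of the Baumslag group. -/
noncomputable def bBG : BG := HNNExtension.t

/-- Conjugacy in the Baumslag group `G(1,2)`. -/
def conjBG (x y : BG) : Prop := ∃ z : BG, z * x * z⁻¹ = y

/-- The tower function: `tow 0 = 0`, `tow (i+1) = 2 ^ tow i`. -/
def tow : ℕ → ℕ
  | 0 => 0
  | i + 1 => 2 ^ tow i

/-- The elements `w_0 = t`, `w_{n+1} = b·w_n·a·w_n⁻¹·b⁻¹` of `G(1,2)`. -/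
noncomputable def wseq : ℕ → BG
  | 0 => ι tH
  | n + 1 => bBG * wseq n * ι aH * (wseq n)⁻¹ * bBG⁻¹

/-- The word lengths `ℓ(0) = 1`, `ℓ(n+1) = 2·ℓ(n) + 3` of the words `w_n`. -/
def lenw : ℕ → ℕ
  | 0 => 1
  | n + 1 => 2 * lenw n + 3

lemma pow2_natCast (T : ℕ) : ((pow2 (T:ℤ) : DyadicQ) : ℚ) = 2 ^ T := by
  simp [pow2, zpow_natCast, Units.val_pow_eq_pow_val, DyadicQ.two]

lemma conjH_key (T : ℕ) : tH ^ T * aH * (tH ^ T)⁻¹ = aH ^ (2 ^ T) := by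
  have h1 : tH ^ T = Hgrp.mk 0 (T:ℤ) := by rw [← zpow_natCast, tH_zpow]
  have h2 : aH ^ (2 ^ T) = Hgrp.mk ((2:ℕ) ^ T : ℤ) 0 := by
    rw [← zpow_natCast, aH_zpow]; norm_cast
  rw [h1, h2]
  simp only [Hgrp.inv_def, Hgrp.mul_def, aH, Hgrp.mk.injEq]
  refine ⟨?_, by ring⟩
  have hp : pow2 (T:ℤ) = (((2:ℕ) ^ T : ℤ) : DyadicQ) := by
    apply Subtype.ext; rw [pow2_natCast]; push_cast
    norm_num [show ((2:DyadicQ):ℚ) = 2 from rfl]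
  simp [hp]

lemma phi_key (k : ℤ) : bBG * ι (aH ^ k) * bBG⁻¹ = ι (tH ^ k) := by
  have h := HNNExtension.equiv_eq_conj (φ := φBS)
    (zpowMulEquiv aH aH_zpow_injective (Multiplicative.ofAdd k))
  have h1 : ((zpowMulEquiv aH aH_zpow_injective (Multiplicative.ofAdd k) :
      Subgroup.zpowers aH) : Hgrp) = aH ^ k := rfl
  have h2 : ((φBS (zpowMulEquiv aH aH_zpow_injective (Multiplicative.ofAdd k)) :
      Subgroup.zpowers tH) : Hgrp) = tH ^ k := by
    show ((zpowMulEquiv tH tH_zpow_injective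
      ((zpowMulEquiv aH aH_zpow_injective).symm
        (zpowMulEquiv aH aH_zpow_injective (Multiplicative.ofAdd k)))) : Hgrp) = tH ^ k
    rw [MulEquiv.symm_apply_apply]
    rfl
  rw [h1, h2] at h
  exact h.symm

theorem stmt9 : ∀ n : ℕ, lenw n = 2 ^ (n + 2) - 3 ∧ wseq n = ι tH ^ tow (n + 1) := by
  intro n
  induction n with
  | zero => simp [lenw, wseq, tow]
  | succ n ih =>
    obtain ⟨hl, hw⟩ := ih
    constructor
    · have h4 : 4 ≤ 2 ^ (n + 2) := by
        calc 4 = 2 ^ 2 := rfl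
        _ ≤ 2 ^ (n + 2) := Nat.pow_le_pow_right (by norm_num) (by omega)
      have : (2:ℕ) ^ (n + 1 + 2) = 2 * 2 ^ (n + 2) := by ring
      simp [lenw, hl, this]
      omega
    · have key : wseq (n+1) = bBG * ι (aH ^ 2 ^ tow (n+1)) * bBG⁻¹ := by
        rw [show wseq (n+1) = bBG * wseq n * ι aH * (wseq n)⁻¹ * bBG⁻¹ from rfl, hw,
          ← map_pow]
        have mid : ι (tH ^ tow (n+1)) * ι aH * (ι (tH ^ tow (n+1)))⁻¹
            = ι (aH ^ 2 ^ tow (n+1)) := by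
          rw [← map_inv, ← map_mul, ← map_mul, conjH_key]
        rw [show ∀ x y z : BG, bBG * x * y * z * bBG⁻¹ = bBG * (x * y * z) * bBG⁻¹
          from fun x y z => by group, mid]
      rw [key, show (2:ℕ) ^ tow (n+1) = tow (n+2) from rfl,
        show (aH : Hgrp) ^ tow (n+2) = aH ^ ((tow (n+2) : ℤ)) by norm_cast,
        phi_key, ← zpow_natCast (ι tH), map_zpow]
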